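/- (Orthonormal-design soft-thresholding form) Suppose XᵀX = I, θ̂ minimizes ½‖y − Xθ‖₂² + nλ·eye(θ) with nλ > 0, θ̂ ≠ 0, and let Z = √(‖(1−r)⊙θ̂‖₁² + ‖r⊙θ̂‖₂²) and θ̂^OLS = Xᵀy. Then for each coordinate i with rᵢ ∈ {0,1}: θ̂ᵢ = (θ̂ᵢ^OLS / (1 + (nλ/Z)rᵢ²)) · max(0, 1 − nλ(1−rᵢ)(1 + ‖(1−r)⊙θ̂‖₁/Z)/|θ̂ᵢ^OLS|) whenever θ̂ᵢ^OLS ≠ 0, and θ̂ᵢ = 0 when θ̂ᵢ^OLS = 0. In particular, if rᵢ = 0 and |θ̂ᵢ^OLS| ≤ nλ(1 + ‖(1−r)⊙θ̂‖₁/Z), then θ̂ᵢ = 0. -/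

import Mathlib

open Filter Set

lemma aux_right_deriv_nonneg {h : ℝ → ℝ} {D a : ℝ} (hd : HasDerivAt h D a)
    (hm : ∀ t, a ≤ t → h a ≤ h t) : 0 ≤ D := by
  have hs := hasDerivAt_iff_tendsto_slope.1 hd
  have hsub : Set.Ioi a ⊆ {a}ᶜ := fun x hx => Set.mem_compl_singleton_iff.2 (ne_of_gt hx)
  have hs' : Filter.Tendsto (slope h a) (nhdsWithin a (Set.Ioi a)) (nhds D) :=
    hs.mono_left (nhdsWithin_mono a hsub)
  refine ge_of_tendsto hs' ?_
  filter_upwards [self_mem_nhdsWithin] with t ht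
  rw [slope_def_field]
  exact div_nonneg (sub_nonneg.2 (hm t (le_of_lt ht))) (sub_nonneg.2 (le_of_lt ht))

lemma aux_left_deriv_nonpos {h : ℝ → ℝ} {D a : ℝ} (hd : HasDerivAt h D a)
    (hm : ∀ t, t ≤ a → h a ≤ h t) : D ≤ 0 := by
  have hs := hasDerivAt_iff_tendsto_slope.1 hd
  have hsub : Set.Iio a ⊆ {a}ᶜ := fun x hx => Set.mem_compl_singleton_iff.2 (ne_of_lt hx)
  have hs' : Filter.Tendsto (slope h a) (nhdsWithin a (Set.Iio a)) (nhds D) :=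
    hs.mono_left (nhdsWithin_mono a hsub)
  refine le_of_tendsto hs' ?_
  filter_upwards [self_mem_nhdsWithin] with t ht
  rw [slope_def_field]
  exact div_nonpos_of_nonneg_of_nonpos (sub_nonneg.2 (hm t (le_of_lt ht)))
    (sub_nonpos.2 (le_of_lt ht))

lemma aux_derivA (a nl S' K t : ℝ) (h : K + t^2 ≠ 0) :
    HasDerivAt (fun s : ℝ => (1/2)*s^2 - a*s + nl*(S' + Real.sqrt (K + s^2)))
      (t - a + nl*(2*t/(2*Real.sqrt (K + t^2)))) t := by
  have hsq : HasDerivAt (fun s : ℝ => s^2) (2*t) t := by simpa using hasDerivAt_pow 2 t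
  have hq : HasDerivAt (fun s : ℝ => (1/2)*s^2 - a*s) (t - a) t := by
    have : HasDerivAt (fun s : ℝ => (1/2)*s^2 - a*s) ((1/2)*(2*t) - a*1) t :=
      (hsq.const_mul (1/2 : ℝ)).sub ((hasDerivAt_id t).const_mul a)
    convert this using 1
    ring
  have hinner : HasDerivAt (fun s : ℝ => K + s^2) (2*t) t := hsq.const_add K
  have hsqrt := hinner.sqrt h
  exact hq.add ((hsqrt.const_add S').const_mul nl)

lemma aux_derivB (a nl S' Q' t : ℝ) (h : (t+S')^2 + Q' ≠ 0) :
    HasDerivAt (fun s : ℝ => (1/2)*s^2 - a*s + nl*(s + S' + Real.sqrt ((s+S')^2 + Q')))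
      (t - a + nl*(1 + 2*(t+S')/(2*Real.sqrt ((t+S')^2+Q')))) t := by
  have hsq : HasDerivAt (fun s : ℝ => s^2) (2*t) t := by simpa using hasDerivAt_pow 2 t
  have hq : HasDerivAt (fun s : ℝ => (1/2)*s^2 - a*s) (t - a) t := by
    have : HasDerivAt (fun s : ℝ => (1/2)*s^2 - a*s) ((1/2)*(2*t) - a*1) t :=
      (hsq.const_mul (1/2 : ℝ)).sub ((hasDerivAt_id t).const_mul a)
    convert this using 1
    ring
  have h0 : HasDerivAt (fun s : ℝ => s + S') 1 t := (hasDerivAt_id t).add_const S'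
  have hinner : HasDerivAt (fun s : ℝ => (s+S')^2 + Q') (2*(t+S')) t := by
    have := (h0.pow 2).add_const Q'
    simpa using this
  have hsqrt := hinner.sqrt h
  exact hq.add ((h0.add hsqrt).const_mul nl)

lemma aux_derivBneg (a nl S' Q' t : ℝ) (h : (-t+S')^2 + Q' ≠ 0) :
    HasDerivAt (fun s : ℝ => (1/2)*s^2 - a*s + nl*(-s + S' + Real.sqrt ((-s+S')^2 + Q')))
      (t - a + nl*(-1 + (2*(-t+S')*(-1))/(2*Real.sqrt ((-t+S')^2+Q')))) t := by
  have hsq : HasDerivAt (fun s : ℝ => s^2) (2*t) t := by simpa using hasDerivAt_pow 2 t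
  have hq : HasDerivAt (fun s : ℝ => (1/2)*s^2 - a*s) (t - a) t := by
    have : HasDerivAt (fun s : ℝ => (1/2)*s^2 - a*s) ((1/2)*(2*t) - a*1) t :=
      (hsq.const_mul (1/2 : ℝ)).sub ((hasDerivAt_id t).const_mul a)
    convert this using 1
    ring
  have h0 : HasDerivAt (fun s : ℝ => -s + S') (-1) t := ((hasDerivAt_id t).neg).add_const S'
  have hinner : HasDerivAt (fun s : ℝ => (-s+S')^2 + Q') (2*(-t+S')*(-1)) t := by
    have := (h0.pow 2).add_const Q'
    simpa using this
  have hsqrt := hinner.sqrt h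
  exact hq.add ((h0.add hsqrt).const_mul nl)

lemma aux_sum_sq {n d : ℕ} (X : Fin n → Fin d → ℝ) (y : Fin n → ℝ)
    (horth : ∀ i j : Fin d, (∑ k, X k i * X k j) = if i = j then 1 else 0)
    (θ : Fin d → ℝ) :
    (∑ k, (y k - ∑ l, X k l * θ l) ^ 2)
      = (∑ k, (y k)^2) - 2 * (∑ l, (∑ k, X k l * y k) * θ l) + ∑ l, (θ l)^2 := by
  have e1 : ∀ k, (y k - ∑ l, X k l * θ l) ^ 2
      = (y k)^2 - 2 * (∑ l, (X k l * y k) * θ l)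
        + ∑ l, ∑ m, (θ l * θ m) * (X k l * X k m) := by
    intro k
    have h1 : (∑ l, (X k l * y k) * θ l) = y k * ∑ l, X k l * θ l := by
      rw [Finset.mul_sum]; exact Finset.sum_congr rfl fun l _ => by ring
    have h2 : (∑ l, ∑ m, (θ l * θ m) * (X k l * X k m))
        = (∑ l, X k l * θ l) * (∑ m, X k m * θ m) := by
      rw [Finset.sum_mul_sum]
      exact Finset.sum_congr rfl fun l _ => Finset.sum_congr rfl fun m _ => by ring
    rw [h1, h2]; ring
  rw [Finset.sum_congr rfl fun k _ => e1 k]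
  rw [Finset.sum_add_distrib, Finset.sum_sub_distrib]
  congr 1
  · congr 1
    rw [← Finset.mul_sum, Finset.sum_comm]
    congr 1
    exact Finset.sum_congr rfl fun l _ => by rw [Finset.sum_mul]
  · rw [Finset.sum_comm]
    refine Finset.sum_congr rfl fun l _ => ?_
    rw [Finset.sum_comm]
    have : ∀ m, (∑ k, (θ l * θ m) * (X k l * X k m)) = (θ l * θ m) * ∑ k, X k l * X k m := by
      intro m; rw [Finset.mul_sum]
    rw [Finset.sum_congr rfl fun m _ => this m]
    simp only [horth]
    simp [Finset.sum_ite_eq, sq]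
lemma aux_caseA {a nl S' Q' t Z : ℝ} (hnl : 0 < nl) (hZpos : 0 < Z)
    (hZsq : Z^2 = (S'^2 + Q') + t^2)
    (hmin : ∀ s : ℝ, (1/2)*t^2 - a*t + nl*(S' + Real.sqrt ((S'^2+Q') + t^2))
        ≤ (1/2)*s^2 - a*s + nl*(S' + Real.sqrt ((S'^2+Q') + s^2))) :
    t * (1 + nl/Z) = a := by
  have harg : 0 < (S'^2+Q') + t^2 := by rw [← hZsq]; positivity
  have hsq : Real.sqrt ((S'^2+Q') + t^2) = Z := by rw [← hZsq, Real.sqrt_sq hZpos.le]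
  have hloc : IsLocalMin (fun s : ℝ => (1/2)*s^2 - a*s + nl*(S' + Real.sqrt ((S'^2+Q') + s^2))) t :=
    Filter.Eventually.of_forall hmin
  have heq := hloc.hasDerivAt_eq_zero (aux_derivA a nl S' (S'^2+Q') t harg.ne')
  rw [hsq] at heq
  have hZne : Z ≠ 0 := hZpos.ne'
  field_simp at heq ⊢
  linarith

lemma aux_caseB_pos {a nl S' Q' t Z : ℝ} (hnl : 0 < nl) (ht : 0 < t)
    (hZpos : 0 < Z) (hZsq : Z^2 = (t + S')^2 + Q')
    (hmin : ∀ s : ℝ, (1/2)*t^2 - a*t + nl*(|t| + S' + Real.sqrt ((|t| + S')^2 + Q'))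
      ≤ (1/2)*s^2 - a*s + nl*(|s| + S' + Real.sqrt ((|s| + S')^2 + Q'))) :
    a = t + nl * (1 + (t + S')/Z) := by
  have harg : 0 < (t+S')^2 + Q' := by rw [← hZsq]; positivity
  have hsq : Real.sqrt ((t+S')^2 + Q') = Z := by rw [← hZsq, Real.sqrt_sq hZpos.le]
  have hloc : IsLocalMin (fun s : ℝ => (1/2)*s^2 - a*s + nl*(s + S' + Real.sqrt ((s+S')^2 + Q'))) t := by
    have h1 : ∀ᶠ s in nhds t, 0 < s := eventually_gt_nhds ht
    show ∀ᶠ s in nhds t, _ ≤ _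
    filter_upwards [h1] with s hs
    have e1 := hmin s
    rw [abs_of_pos ht, abs_of_pos hs] at e1
    exact e1
  have heq := hloc.hasDerivAt_eq_zero (aux_derivB a nl S' Q' t harg.ne')
  rw [hsq] at heq
  have hZne : Z ≠ 0 := hZpos.ne'
  field_simp at heq ⊢
  linarith

lemma aux_caseB_neg {a nl S' Q' t Z : ℝ} (hnl : 0 < nl) (ht : t < 0)
    (hZpos : 0 < Z) (hZsq : Z^2 = (-t + S')^2 + Q')
    (hmin : ∀ s : ℝ, (1/2)*t^2 - a*t + nl*(|t| + S' + Real.sqrt ((|t| + S')^2 + Q'))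
      ≤ (1/2)*s^2 - a*s + nl*(|s| + S' + Real.sqrt ((|s| + S')^2 + Q'))) :
    a = t - nl * (1 + (-t + S')/Z) := by
  have harg : 0 < (-t+S')^2 + Q' := by rw [← hZsq]; positivity
  have hsq : Real.sqrt ((-t+S')^2 + Q') = Z := by rw [← hZsq, Real.sqrt_sq hZpos.le]
  have hloc : IsLocalMin (fun s : ℝ => (1/2)*s^2 - a*s + nl*(-s + S' + Real.sqrt ((-s+S')^2 + Q'))) t := by
    have h1 : ∀ᶠ s in nhds t, s < 0 := eventually_lt_nhds ht
    show ∀ᶠ s in nhds t, _ ≤ _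
    filter_upwards [h1] with s hs
    have e1 := hmin s
    rw [abs_of_neg ht, abs_of_neg hs] at e1
    exact e1
  have heq := hloc.hasDerivAt_eq_zero (aux_derivBneg a nl S' Q' t harg.ne')
  rw [hsq] at heq
  have hZne : Z ≠ 0 := hZpos.ne'
  field_simp at heq ⊢
  linarith

lemma aux_caseB_zero {a nl S' Q' Z : ℝ} (hnl : 0 < nl)
    (hZpos : 0 < Z) (hZsq : Z^2 = S'^2 + Q')
    (hmin : ∀ s : ℝ, (1/2)*(0:ℝ)^2 - a*0 + nl*(|(0:ℝ)| + S' + Real.sqrt ((|(0:ℝ)| + S')^2 + Q'))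
      ≤ (1/2)*s^2 - a*s + nl*(|s| + S' + Real.sqrt ((|s| + S')^2 + Q'))) :
    |a| ≤ nl * (1 + S'/Z) := by
  have harg : 0 < S'^2 + Q' := by rw [← hZsq]; positivity
  have hsq : Real.sqrt (S'^2 + Q') = Z := by rw [← hZsq, Real.sqrt_sq hZpos.le]
  have hZne : Z ≠ 0 := hZpos.ne'
  have hargP : ((0:ℝ)+S')^2 + Q' ≠ 0 := by rw [zero_add]; exact harg.ne'
  have hargN : (-(0:ℝ)+S')^2 + Q' ≠ 0 := by rw [neg_zero, zero_add]; exact harg.ne'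
  have hright : 0 ≤ (0:ℝ) - a + nl*(1 + 2*((0:ℝ)+S')/(2*Real.sqrt (((0:ℝ)+S')^2+Q'))) := by
    refine aux_right_deriv_nonneg (aux_derivB a nl S' Q' 0 hargP) (fun s hs => ?_)
    have e1 := hmin s
    rw [abs_of_nonneg hs] at e1
    simpa using e1
  have hleft : (0:ℝ) - a + nl*(-1 + (2*(-(0:ℝ)+S')*(-1))/(2*Real.sqrt ((-(0:ℝ)+S')^2+Q'))) ≤ 0 := by
    refine aux_left_deriv_nonpos (aux_derivBneg a nl S' Q' 0 hargN) (fun s hs => ?_)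
    have e1 := hmin s
    rw [abs_of_nonpos hs] at e1
    simpa using e1
  rw [zero_add] at hright
  rw [neg_zero, zero_add] at hleft
  rw [hsq] at hright hleft
  rw [abs_le]
  have hd1 : 2*S'/(2*Z) = S'/Z := by field_simp
  have hd2 : 2*S'*(-1)/(2*Z) = -(S'/Z) := by field_simp
  rw [hd1] at hright
  rw [hd2] at hleft
  constructor
  · ring_nf at hleft ⊢; linarith
  · ring_nf at hright ⊢; linarith

lemma aux_finalB {a t T : ℝ} (hT : 0 < T)
    (hpos : 0 < t → a = t + T) (hneg : t < 0 → a = t - T) (hzero : t = 0 → |a| ≤ T) :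
    (a ≠ 0 → t = a * max 0 (1 - T/|a|)) ∧ (a = 0 → t = 0) ∧ (|a| ≤ T → t = 0) := by
  rcases lt_trichotomy t 0 with h | h | h
  · have ha := hneg h
    have haneg : a < 0 := by linarith
    have hane : a ≠ 0 := haneg.ne
    have habs : |a| = -a := abs_of_neg haneg
    have hTa : T ≤ -a := by linarith
    refine ⟨fun _ => ?_, fun h0 => absurd h0 hane, fun hle => ?_⟩
    · rw [habs, max_eq_right]
      · have e : a * (1 - T/(-a)) = a + T := by
          rw [div_neg, sub_neg_eq_add, mul_add, mul_div_cancel₀ _ hane, mul_one]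
        rw [e]; linarith
      · rw [sub_nonneg, div_le_one (by linarith : (0:ℝ) < -a)]; exact hTa
    · rw [habs] at hle; linarith
  · have hz := hzero h
    refine ⟨fun hane => ?_, fun _ => h, fun _ => h⟩
    rw [max_eq_left, mul_zero]
    · exact h
    · rw [sub_nonpos, le_div_iff₀ (abs_pos.2 hane)]; linarith
  · have ha := hpos h
    have hapos : 0 < a := by linarith
    have hane : a ≠ 0 := hapos.ne'
    have habs : |a| = a := abs_of_pos hapos
    have hTa : T ≤ a := by linarith
    refine ⟨fun _ => ?_, fun h0 => absurd h0 hane, fun hle => ?_⟩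
    · rw [habs, max_eq_right]
      · have e : a * (1 - T/a) = a - T := by field_simp
        rw [e]; linarith
      · rw [sub_nonneg, div_le_one hapos]; exact hTa
    · rw [habs] at hle; linarith

noncomputable def eye {d : ℕ} (r θ : Fin d → ℝ) : ℝ :=
  (∑ i, (1 - r i) * |θ i|) +
    Real.sqrt ((∑ i, (1 - r i) * |θ i|) ^ 2 + ∑ i, (r i * θ i) ^ 2)

theorem eye_orthonormal_soft_threshold {n d : ℕ}
    (X : Fin n → Fin d → ℝ) (y : Fin n → ℝ) (r : Fin d → ℝ)
    (hr : ∀ i, r i = 0 ∨ r i = 1)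
    (nl : ℝ) (hnl : 0 < nl)
    (horth : ∀ i j : Fin d, (∑ k, X k i * X k j) = if i = j then 1 else 0)
    (θhat : Fin d → ℝ) (hθ : θhat ≠ 0)
    (hmin : ∀ θ : Fin d → ℝ,
      (1 / 2) * (∑ k, (y k - ∑ l, X k l * θhat l) ^ 2) + nl * eye r θhat ≤
      (1 / 2) * (∑ k, (y k - ∑ l, X k l * θ l) ^ 2) + nl * eye r θ)
    (Z : ℝ)
    (hZ : Z = Real.sqrt ((∑ l, (1 - r l) * |θhat l|) ^ 2 + ∑ l, (r l * θhat l) ^ 2))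
    (θOLS : Fin d → ℝ) (hOLS : ∀ i, θOLS i = ∑ k, X k i * y k) :
    ∀ i : Fin d,
      (θOLS i ≠ 0 →
        θhat i = θOLS i / (1 + nl / Z * (r i) ^ 2) *
          max 0 (1 - nl * (1 - r i) * (1 + (∑ l, (1 - r l) * |θhat l|) / Z) / |θOLS i|)) ∧
      (θOLS i = 0 → θhat i = 0) ∧
      (r i = 0 → |θOLS i| ≤ nl * (1 + (∑ l, (1 - r l) * |θhat l|) / Z) → θhat i = 0) := by
  intro i
  classical
  set a := θOLS i with ha
  set S' : ℝ := ∑ l ∈ ({i}ᶜ : Finset (Fin d)), (1 - r l) * |θhat l| with hS'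
  set Q' : ℝ := ∑ l ∈ ({i}ᶜ : Finset (Fin d)), (r l * θhat l)^2 with hQ'
  have hS'nn : 0 ≤ S' := Finset.sum_nonneg fun l _ => by
    rcases hr l with h|h <;> simp [h, abs_nonneg]
  have hQ'nn : 0 ≤ Q' := Finset.sum_nonneg fun l _ => sq_nonneg _
  have hSsplit : (∑ l, (1 - r l) * |θhat l|) = (1 - r i) * |θhat i| + S' :=
    Fintype.sum_eq_add_sum_compl i _
  have hQsplit : (∑ l, (r l * θhat l)^2) = (r i * θhat i)^2 + Q' :=
    Fintype.sum_eq_add_sum_compl i _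
  have hQnn : 0 ≤ ∑ l, (r l * θhat l)^2 := Finset.sum_nonneg fun l _ => sq_nonneg _
  have hargnn : 0 ≤ (∑ l, (1 - r l) * |θhat l|)^2 + ∑ l, (r l * θhat l)^2 := by
    have := sq_nonneg (∑ l, (1 - r l) * |θhat l|); linarith
  have hargpos : 0 < (∑ l, (1 - r l) * |θhat l|)^2 + ∑ l, (r l * θhat l)^2 := by
    rcases hargnn.lt_or_eq with h|h
    · exact h
    · exfalso; apply hθ; funext m
      have hSnn : 0 ≤ ∑ l, (1 - r l) * |θhat l| := Finset.sum_nonneg fun l _ => by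
        rcases hr l with h'|h' <;> simp [h', abs_nonneg]
      have hQ0 : (∑ l, (r l * θhat l)^2) = 0 := by nlinarith
      have hS0 : (∑ l, (1 - r l) * |θhat l|) = 0 := by nlinarith
      have hQl := (Finset.sum_eq_zero_iff_of_nonneg
        (fun l _ => sq_nonneg (r l * θhat l))).1 hQ0 m (Finset.mem_univ m)
      have hSl := (Finset.sum_eq_zero_iff_of_nonneg
        (fun l _ => by rcases hr l with h'|h' <;> simp [h', abs_nonneg])).1 hS0 m (Finset.mem_univ m)
      rcases hr m with h'|h'
      · rw [h'] at hSl; simpa using hSl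
      · rw [h'] at hQl; simpa using hQl
  have hZpos : 0 < Z := by rw [hZ]; exact Real.sqrt_pos.2 hargpos
  have hZne : Z ≠ 0 := hZpos.ne'
  have hZsq : Z^2 = (∑ l, (1 - r l) * |θhat l|)^2 + ∑ l, (r l * θhat l)^2 := by
    rw [hZ, Real.sq_sqrt hargnn]
  have hcompl : ∀ (t : ℝ) (l : Fin d), l ∈ ({i}ᶜ : Finset (Fin d)) →
      Function.update θhat i t l = θhat l := by
    intro t l hl
    exact Function.update_of_ne (by simpa using hl) _ _
  have heye : ∀ t : ℝ, eye r (Function.update θhat i t)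
      = ((1 - r i) * |t| + S') + Real.sqrt (((1 - r i) * |t| + S')^2 + ((r i * t)^2 + Q')) := by
    intro t
    have c1 : (∑ l ∈ ({i}ᶜ : Finset (Fin d)), (1 - r l) * |Function.update θhat i t l|) = S' :=
      Finset.sum_congr rfl fun l hl => by rw [hcompl t l hl]
    have c2 : (∑ l ∈ ({i}ᶜ : Finset (Fin d)), (r l * Function.update θhat i t l)^2) = Q' :=
      Finset.sum_congr rfl fun l hl => by rw [hcompl t l hl]
    unfold eye
    rw [Fintype.sum_eq_add_sum_compl i (fun l => (1 - r l) * |Function.update θhat i t l|),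
        Fintype.sum_eq_add_sum_compl i (fun l => (r l * Function.update θhat i t l)^2),
        c1, c2, Function.update_self]
  have hmin1 : ∀ t : ℝ, (1/2)*(θhat i)^2 - a*(θhat i) + nl * eye r θhat
      ≤ (1/2)*t^2 - a*t + nl * eye r (Function.update θhat i t) := by
    intro t
    have h := hmin (Function.update θhat i t)
    rw [aux_sum_sq X y horth θhat, aux_sum_sq X y horth (Function.update θhat i t)] at h
    have e1 : (∑ l, (∑ k, X k l * y k) * (Function.update θhat i t l))
        = (∑ k, X k i * y k) * t
          + ∑ l ∈ ({i}ᶜ : Finset (Fin d)), (∑ k, X k l * y k) * θhat l := by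
      rw [Fintype.sum_eq_add_sum_compl i
        (fun l => (∑ k, X k l * y k) * (Function.update θhat i t l)), Function.update_self]
      congr 1
      exact Finset.sum_congr rfl fun l hl => by rw [hcompl t l hl]
    have e2 : (∑ l, (Function.update θhat i t l)^2)
        = t^2 + ∑ l ∈ ({i}ᶜ : Finset (Fin d)), (θhat l)^2 := by
      rw [Fintype.sum_eq_add_sum_compl i (fun l => (Function.update θhat i t l)^2),
        Function.update_self]
      congr 1
      exact Finset.sum_congr rfl fun l hl => by rw [hcompl t l hl]
    have e3 : (∑ l, (∑ k, X k l * y k) * θhat l)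
        = (∑ k, X k i * y k) * (θhat i)
          + ∑ l ∈ ({i}ᶜ : Finset (Fin d)), (∑ k, X k l * y k) * θhat l :=
      Fintype.sum_eq_add_sum_compl i _
    have e4 : (∑ l, (θhat l)^2) = (θhat i)^2 + ∑ l ∈ ({i}ᶜ : Finset (Fin d)), (θhat l)^2 :=
      Fintype.sum_eq_add_sum_compl i _
    rw [e1, e2, e3, e4] at h
    have ha' : a = ∑ k, X k i * y k := ha.trans (hOLS i)
    rw [← ha'] at h
    linarith
  rcases hr i with hri | hri
  · -- r i = 0
    have heyeB : ∀ t : ℝ, eye r (Function.update θhat i t)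
        = |t| + S' + Real.sqrt ((|t| + S')^2 + Q') := by
      intro t; rw [heye t, hri]; norm_num
    have heyehat : eye r θhat = |θhat i| + S' + Real.sqrt ((|θhat i| + S')^2 + Q') := by
      have e := heyeB (θhat i)
      rwa [Function.update_eq_self] at e
    have hminB : ∀ s : ℝ,
        (1/2)*(θhat i)^2 - a*(θhat i) + nl*(|θhat i| + S' + Real.sqrt ((|θhat i| + S')^2 + Q'))
        ≤ (1/2)*s^2 - a*s + nl*(|s| + S' + Real.sqrt ((|s| + S')^2 + Q')) := by
      intro s
      have h := hmin1 s
      rwa [heyeB s, heyehat] at h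
    have hZsqB : Z^2 = (|θhat i| + S')^2 + Q' := by
      rw [hZsq, hSsplit, hQsplit, hri]; ring
    have hSgoal : (∑ l, (1 - r l) * |θhat l|) = |θhat i| + S' := by
      rw [hSsplit, hri]; ring
    set T : ℝ := nl * (1 + (|θhat i| + S')/Z) with hT
    have hTpos : 0 < T := by
      have h1 : 0 ≤ (|θhat i| + S')/Z := div_nonneg (by positivity) hZpos.le
      have : 0 < 1 + (|θhat i| + S')/Z := by linarith
      exact mul_pos hnl this
    have hpos : 0 < θhat i → a = θhat i + T := by
      intro h
      have habs : |θhat i| = θhat i := abs_of_pos h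
      have := aux_caseB_pos hnl h hZpos (by rw [hZsqB, habs]) hminB
      rw [hT, habs]; exact this
    have hneg : θhat i < 0 → a = θhat i - T := by
      intro h
      have habs : |θhat i| = -θhat i := abs_of_neg h
      have := aux_caseB_neg hnl h hZpos (by rw [hZsqB, habs]) hminB
      rw [hT, habs]; exact this
    have hzero : θhat i = 0 → |a| ≤ T := by
      intro h
      have hZsq0 : Z^2 = S'^2 + Q' := by rw [hZsqB, h]; norm_num
      have hm0 : ∀ s : ℝ, (1/2)*(0:ℝ)^2 - a*0 + nl*(|(0:ℝ)| + S' + Real.sqrt ((|(0:ℝ)| + S')^2 + Q'))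
          ≤ (1/2)*s^2 - a*s + nl*(|s| + S' + Real.sqrt ((|s| + S')^2 + Q')) := by
        intro s
        have h2 := hminB s
        rw [h] at h2
        exact h2
      have := aux_caseB_zero hnl hZpos hZsq0 hm0
      rw [hT, h]; simpa using this
    obtain ⟨g1, g2, g3⟩ := aux_finalB hTpos hpos hneg hzero
    refine ⟨fun hane => ?_, g2, fun _ hle => ?_⟩
    · rw [hri, hSgoal]
      have e0 : a / (1 + nl / Z * (0:ℝ)^2) = a := by norm_num
      rw [e0]
      have e1 : nl * (1 - 0) * (1 + (|θhat i| + S')/Z) = T := by rw [hT]; ring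
      rw [e1]
      exact g1 hane
    · apply g3
      rwa [hT, ← hSgoal]
  · -- r i = 1
    have heyeA : ∀ t : ℝ, eye r (Function.update θhat i t)
        = S' + Real.sqrt ((S'^2 + Q') + t^2) := by
      intro t
      rw [heye t, hri]
      norm_num
      ring_nf
    have heyehat : eye r θhat = S' + Real.sqrt ((S'^2 + Q') + (θhat i)^2) := by
      have e := heyeA (θhat i)
      rwa [Function.update_eq_self] at e
    have hminA : ∀ s : ℝ,
        (1/2)*(θhat i)^2 - a*(θhat i) + nl*(S' + Real.sqrt ((S'^2+Q') + (θhat i)^2))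
        ≤ (1/2)*s^2 - a*s + nl*(S' + Real.sqrt ((S'^2+Q') + s^2)) := by
      intro s
      have h := hmin1 s
      rwa [heyeA s, heyehat] at h
    have hZsqA : Z^2 = (S'^2 + Q') + (θhat i)^2 := by
      rw [hZsq, hSsplit, hQsplit, hri]; ring
    have hres := aux_caseA hnl hZpos hZsqA hminA
    have hc : 0 < 1 + nl/Z := by
      have : 0 < nl/Z := div_pos hnl hZpos
      linarith
    refine ⟨fun hane => ?_, fun h0 => ?_, fun h0 _ => ?_⟩
    · rw [hri]
      have e1 : nl * (1 - 1) * (1 + (∑ l, (1 - r l) * |θhat l|)/Z) / |a| = 0 := by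
        norm_num
      rw [e1, sub_zero, max_eq_right zero_le_one, mul_one]
      rw [eq_div_iff (by positivity : (1 + nl/Z*(1:ℝ)^2) ≠ 0)]
      nlinarith [hres]
    · have := hres.trans h0
      exact (mul_eq_zero.1 this).resolve_right hc.ne'
    · rw [h0] at hri; norm_num at hri
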